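/- For any quantum tensor network N = (G, d, s, t), the supremum over multiplicative flows over ℝ of the flow value equals the quantum min-cut: QMF_ℝ(N) = QMC(N). In particular, there exists a real-valued multiplicative flow achieving value exactly QMC(N). -/

import Mathlib

open Finset

/-- The quantum min-cut of a network. -/
noncomputable def QMC {V : Type*} [DecidableEq V] (E : Finset (V × V)) (d : V × V → ℕ)
    (s t : V) : ℕ :=
  sInf {m : ℕ | ∃ S : Finset V, s ∈ S ∧ t ∉ S ∧
    m = ∏ e ∈ E.filter (fun e => e.1 ∈ S ∧ e.2 ∉ S), d e}

/-- A multiplicative flow over ℝ on a quantum tensor network: positive values,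
single-direction condition, capacity constraint, multiplicative conservation. -/
def IsRealQFlow {V : Type*} [DecidableEq V] (E : Finset (V × V)) (d : V × V → ℕ)
    (s t : V) (f : V × V → ℝ) : Prop :=
  (∀ e ∈ E, 0 < f e) ∧
  (∀ e ∈ E, f e = 1 ∨ f (e.2, e.1) = 1) ∧
  (∀ e ∈ E, 1 / (d e : ℝ) ≤ f e ∧ f e ≤ (d e : ℝ)) ∧
  (∀ v : V, v ≠ s → v ≠ t →
    ∏ e ∈ E.filter (fun e => e.2 = v), f e = ∏ e ∈ E.filter (fun e => e.1 = v), f e)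

/-- The value of a flow: ratio of products at the source. -/
noncomputable def flowValue {V : Type*} [DecidableEq V] (E : Finset (V × V)) (s : V)
    (f : V × V → ℝ) : ℝ :=
  (∏ e ∈ E.filter (fun e => e.1 = s), f e) / (∏ e ∈ E.filter (fun e => e.2 = s), f e)

set_option linter.unusedSectionVars false
set_option linter.unusedVariables false
set_option maxHeartbeats 1000000

namespace QAux
variable {V : Type*} [DecidableEq V]

def RF (E : Finset (V × V)) (d : V × V → ℕ) (s t : V) (r : V × V → ℝ) : Prop :=
  (∀ e, e ∉ E → r e = 1) ∧
  (∀ e ∈ E, 1 / (d e : ℝ) ≤ r e) ∧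
  (∀ e ∈ E, r e * r e.swap = 1) ∧
  (∀ e ∈ E, r e ≤ (d e : ℝ)) ∧
  (∀ v : V, v ≠ s → v ≠ t → ∏ e ∈ E.filter (fun e => e.2 = v), r e = 1)

noncomputable def rval (E : Finset (V × V)) (s : V) (r : V × V → ℝ) : ℝ :=
  ∏ e ∈ E.filter (fun e => e.1 = s), r e

section Basic
variable {E : Finset (V × V)} {d : V × V → ℕ} {s t : V} {r f : V × V → ℝ}

lemma swap_mem (hsymm : ∀ u v : V, (u, v) ∈ E → (v, u) ∈ E) {e : V × V} (he : e ∈ E) :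
    e.swap ∈ E := by
  have := hsymm e.1 e.2 (by simpa using he)
  simpa [Prod.swap] using this

lemma dswap (hdsymm : ∀ u v : V, d (u, v) = d (v, u)) (e : V × V) : d e.swap = d e := by
  have := hdsymm e.1 e.2
  simp [Prod.swap, ← this]

lemma dpos (hd2 : ∀ e ∈ E, 2 ≤ d e) {e : V × V} (he : e ∈ E) : (0 : ℝ) < (d e : ℝ) := by
  have := hd2 e he; positivity

lemma done' (hd2 : ∀ e ∈ E, 2 ≤ d e) {e : V × V} (he : e ∈ E) : (1 : ℝ) ≤ (d e : ℝ) := by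
  have h : (2:ℝ) ≤ (d e : ℝ) := by exact_mod_cast hd2 e he
  linarith

lemma RF.pos (hr : RF E d s t r) (hd2 : ∀ e ∈ E, 2 ≤ d e) {e : V × V} (he : e ∈ E) :
    0 < r e := by
  have h1 := hr.2.1 e he
  have h2 := dpos hd2 he
  have : (0:ℝ) < 1 / (d e : ℝ) := by positivity
  linarith

lemma prod_swap_eq {A B : Finset (V × V)} (g : V × V → ℝ)
    (hAB : ∀ e ∈ A, e.swap ∈ B) (hBA : ∀ e ∈ B, e.swap ∈ A) :
    ∏ e ∈ A, g e.swap = ∏ e ∈ B, g e :=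
  Finset.prod_nbij' Prod.swap Prod.swap hAB hBA
    (fun a _ => Prod.swap_swap a) (fun a _ => Prod.swap_swap a) (fun _ _ => rfl)

lemma prod_swap_filter (hsymm : ∀ u v : V, (u, v) ∈ E → (v, u) ∈ E) (g : V × V → ℝ) (v : V) :
    ∏ e ∈ E.filter (fun e => e.2 = v), g e.swap = ∏ e ∈ E.filter (fun e => e.1 = v), g e := by
  refine prod_swap_eq g ?_ ?_ <;> intro e he <;>
    simp only [mem_filter] at he ⊢ <;>
    exact ⟨swap_mem hsymm he.1, by simp [Prod.swap, he.2]⟩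

lemma prod_swap_filter' (hsymm : ∀ u v : V, (u, v) ∈ E → (v, u) ∈ E) (g : V × V → ℝ) (v : V) :
    ∏ e ∈ E.filter (fun e => e.1 = v), g e.swap = ∏ e ∈ E.filter (fun e => e.2 = v), g e := by
  refine prod_swap_eq g ?_ ?_ <;> intro e he <;>
    simp only [mem_filter] at he ⊢ <;>
    exact ⟨swap_mem hsymm he.1, by simp [Prod.swap, he.2]⟩

lemma RF.swap_eq_inv (hr : RF E d s t r) (hd2 : ∀ e ∈ E, 2 ≤ d e) {e : V × V} (he : e ∈ E) :
    r e.swap = (r e)⁻¹ := by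
  have h := hr.2.2.1 e he
  have hpos := hr.pos hd2 he
  field_simp
  linarith [h]

lemma RF.out_eq_inv_in (hr : RF E d s t r) (hsymm : ∀ u v : V, (u, v) ∈ E → (v, u) ∈ E)
    (hd2 : ∀ e ∈ E, 2 ≤ d e) (v : V) :
    ∏ e ∈ E.filter (fun e => e.1 = v), r e =
      (∏ e ∈ E.filter (fun e => e.2 = v), r e)⁻¹ := by
  rw [← prod_swap_filter hsymm r v, ← Finset.prod_inv_distrib]
  refine Finset.prod_congr rfl fun e he => ?_
  exact hr.swap_eq_inv hd2 (Finset.mem_filter.mp he).1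

lemma RF.cut_identity (hr : RF E d s t r)
    (hsymm : ∀ u v : V, (u, v) ∈ E → (v, u) ∈ E) (hd2 : ∀ e ∈ E, 2 ≤ d e)
    (S : Finset V) (hs : s ∈ S) (ht : t ∉ S) :
    rval E s r = ∏ e ∈ E.filter (fun e => e.1 ∈ S ∧ e.2 ∉ S), r e := by
  have hP1 : ∏ v ∈ S, ∏ e ∈ (E.filter (fun e => e.1 ∈ S)).filter (fun e => e.1 = v), r e
      = ∏ e ∈ E.filter (fun e => e.1 ∈ S), r e :=
    Finset.prod_fiberwise_of_maps_to (fun e he => (Finset.mem_filter.mp he).2) r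
  have hfib : ∀ v ∈ S, (E.filter (fun e => e.1 ∈ S)).filter (fun e => e.1 = v)
      = E.filter (fun e => e.1 = v) := by
    intro v hv
    rw [Finset.filter_filter]
    refine Finset.filter_congr fun e he => ?_
    constructor
    · exact fun h => h.2
    · exact fun h => ⟨h ▸ hv, h⟩
  have hout1 : ∀ v ∈ S, v ≠ s → ∏ e ∈ E.filter (fun e => e.1 = v), r e = 1 := by
    intro v hv hvs
    rw [hr.out_eq_inv_in hsymm hd2 v, hr.2.2.2.2 v hvs (fun h => ht (h ▸ hv))]
    norm_num
  have hP2 : ∏ e ∈ E.filter (fun e => e.1 ∈ S), r e = rval E s r := by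
    rw [← hP1]
    have hcongr : ∏ v ∈ S, ∏ e ∈ (E.filter (fun e => e.1 ∈ S)).filter (fun e => e.1 = v), r e
        = ∏ v ∈ S, ∏ e ∈ E.filter (fun e => e.1 = v), r e :=
      Finset.prod_congr rfl fun v hv => by rw [hfib v hv]
    rw [hcongr]
    exact Finset.prod_eq_single_of_mem s hs (fun v hv hvs => hout1 v hv hvs)
  have hsplit : (∏ e ∈ (E.filter (fun e => e.1 ∈ S)).filter (fun e => e.2 ∈ S), r e) *
      ∏ e ∈ (E.filter (fun e => e.1 ∈ S)).filter (fun e => ¬ e.2 ∈ S), r e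
      = ∏ e ∈ E.filter (fun e => e.1 ∈ S), r e :=
    Finset.prod_filter_mul_prod_filter_not _ _ r
  set A := (E.filter (fun e => e.1 ∈ S)).filter (fun e => e.2 ∈ S) with hA
  have hAmem : ∀ e, e ∈ A ↔ e ∈ E ∧ e.1 ∈ S ∧ e.2 ∈ S := by
    intro e; simp [hA, Finset.mem_filter, and_assoc]
  have hA1 : ∏ e ∈ A, r e = 1 := by
    have hswapA : ∀ e ∈ A, e.swap ∈ A := by
      intro e he
      rw [hAmem] at he ⊢
      exact ⟨swap_mem hsymm he.1, by simpa [Prod.swap] using ⟨he.2.2, he.2.1⟩⟩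
    have h1 : ∏ e ∈ A, r e.swap = ∏ e ∈ A, r e := prod_swap_eq r hswapA hswapA
    have h2 : ∏ e ∈ A, r e.swap = (∏ e ∈ A, r e)⁻¹ := by
      rw [← Finset.prod_inv_distrib]
      exact Finset.prod_congr rfl fun e he => hr.swap_eq_inv hd2 ((hAmem e).mp he).1
    have hpos : 0 < ∏ e ∈ A, r e :=
      Finset.prod_pos fun e he => hr.pos hd2 ((hAmem e).mp he).1
    have hxx : (∏ e ∈ A, r e) * (∏ e ∈ A, r e) = 1 := by
      nth_rewrite 2 [h1.symm.trans h2]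
      exact mul_inv_cancel₀ hpos.ne'
    nlinarith [hpos, hxx]
  have hBeq : (E.filter (fun e => e.1 ∈ S)).filter (fun e => ¬ e.2 ∈ S)
      = E.filter (fun e => e.1 ∈ S ∧ e.2 ∉ S) := by
    rw [Finset.filter_filter]
  rw [← hP2, ← hsplit, hA1, one_mul, hBeq]

/-- Weak duality for net-ratio flows. -/
lemma RF.le_QMC (hr : RF E d s t r)
    (hsymm : ∀ u v : V, (u, v) ∈ E → (v, u) ∈ E) (hd2 : ∀ e ∈ E, 2 ≤ d e)
    (hst : s ≠ t) : rval E s r ≤ (QMC E d s t : ℝ) := by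
  have hne : {m : ℕ | ∃ S : Finset V, s ∈ S ∧ t ∉ S ∧
      m = ∏ e ∈ E.filter (fun e => e.1 ∈ S ∧ e.2 ∉ S), d e}.Nonempty := by
    refine ⟨_, {s}, Finset.mem_singleton_self s, ?_, rfl⟩
    simp [Finset.mem_singleton]
    exact fun h => hst h.symm
  obtain ⟨S, hsS, htS, hQ⟩ := Nat.sInf_mem hne
  rw [hr.cut_identity hsymm hd2 S hsS htS]
  calc ∏ e ∈ E.filter (fun e => e.1 ∈ S ∧ e.2 ∉ S), r e
      ≤ ∏ e ∈ E.filter (fun e => e.1 ∈ S ∧ e.2 ∉ S), (d e : ℝ) := by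
        refine Finset.prod_le_prod (fun e he => ?_) (fun e he => ?_)
        · exact (hr.pos hd2 (Finset.mem_filter.mp he).1).le
        · exact hr.2.2.2.1 e (Finset.mem_filter.mp he).1
    _ = (QMC E d s t : ℝ) := by
        rw [show QMC E d s t = ∏ e ∈ E.filter (fun e => e.1 ∈ S ∧ e.2 ∉ S), d e from hQ]
        push_cast
        rfl

/-- From a real multiplicative flow to a net-ratio flow. -/
lemma RF_of_flow (hsymm : ∀ u v : V, (u, v) ∈ E → (v, u) ∈ E)
    (hdsymm : ∀ u v : V, d (u, v) = d (v, u)) (hd2 : ∀ e ∈ E, 2 ≤ d e)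
    (hf : IsRealQFlow E d s t f) :
    RF E d s t (fun e => if e ∈ E then f e / f e.swap else 1) ∧
      rval E s (fun e => if e ∈ E then f e / f e.swap else 1) = flowValue E s f := by
  have hswapE : ∀ {e : V × V}, e ∈ E → e.swap ∈ E := fun he => swap_mem hsymm he
  have hpos : ∀ e ∈ E, 0 < f e := hf.1
  have hsd : ∀ e ∈ E, f e = 1 ∨ f e.swap = 1 := by
    intro e he
    rcases hf.2.1 e he with h | h
    · exact Or.inl h
    · exact Or.inr h
  have hcap := hf.2.2.1
  constructor
  · refine ⟨fun e he => if_neg he, ?_, ?_, ?_, ?_⟩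
    · intro e he
      simp only [if_pos he]
      rcases hsd e he with h | h
      · rw [h]
        have h1 : f e.swap ≤ (d e.swap : ℝ) := (hcap e.swap (hswapE he)).2
        rw [dswap hdsymm] at h1
        have h2 : 0 < f e.swap := hpos _ (hswapE he)
        calc 1 / (d e : ℝ) ≤ 1 / f e.swap := by
              apply one_div_le_one_div_of_le h2 h1
          _ = 1 / f e.swap := rfl
      · rw [h, div_one]
        exact (hcap e he).1
    · intro e he
      simp only [if_pos he, if_pos (hswapE he), Prod.swap_swap]
      have h1 : f e ≠ 0 := (hpos e he).ne'
      have h2 : f e.swap ≠ 0 := (hpos _ (hswapE he)).ne'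
      field_simp
    · intro e he
      simp only [if_pos he]
      rcases hsd e he with h | h
      · rw [h]
        have h1 : 1 / (d e.swap : ℝ) ≤ f e.swap := (hcap e.swap (hswapE he)).1
        rw [dswap hdsymm] at h1
        have h2 : 0 < f e.swap := hpos _ (hswapE he)
        have h3 : (0:ℝ) < (d e : ℝ) := dpos hd2 he
        rw [div_le_iff₀ h2]
        rw [div_le_iff₀ h3] at h1
        nlinarith
      · rw [h, div_one]
        exact (hcap e he).2
    · intro v hvs hvt
      have hco : ∀ e ∈ E.filter (fun e => e.2 = v),
          (if e ∈ E then f e / f e.swap else 1) = f e / f e.swap := by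
        intro e he
        rw [if_pos (Finset.mem_filter.mp he).1]
      rw [Finset.prod_congr rfl hco, Finset.prod_div_distrib,
        prod_swap_filter hsymm f v, hf.2.2.2 v hvs hvt]
      have : 0 < ∏ e ∈ E.filter (fun e => e.1 = v), f e :=
        Finset.prod_pos fun e he => hpos e (Finset.mem_filter.mp he).1
      exact div_self this.ne'
  · unfold rval flowValue
    have hco : ∀ e ∈ E.filter (fun e => e.1 = s),
        (if e ∈ E then f e / f e.swap else 1) = f e / f e.swap := by
      intro e he
      rw [if_pos (Finset.mem_filter.mp he).1]
    rw [Finset.prod_congr rfl hco, Finset.prod_div_distrib, prod_swap_filter' hsymm f s]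

/-- From a net-ratio flow to a real multiplicative flow. -/
lemma flow_of_RF (hsymm : ∀ u v : V, (u, v) ∈ E → (v, u) ∈ E)
    (hd2 : ∀ e ∈ E, 2 ≤ d e) (hr : RF E d s t r) :
    IsRealQFlow E d s t (fun e => max (r e) 1) ∧
      flowValue E s (fun e => max (r e) 1) = rval E s r := by
  have hswapE : ∀ {e : V × V}, e ∈ E → e.swap ∈ E := fun he => swap_mem hsymm he
  have key : ∀ e ∈ E, max (r e) 1 = r e * max (r e.swap) 1 := by
    intro e he
    rw [hr.swap_eq_inv hd2 he]
    have hpos := hr.pos hd2 he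
    rcases le_total (r e) 1 with h | h
    · rw [max_eq_right h, max_eq_left (one_le_inv_iff₀.mpr ⟨hpos, h⟩)]
      field_simp
    · rw [max_eq_left h, max_eq_right (inv_le_one_of_one_le₀ h)]
      ring
  constructor
  · refine ⟨fun e he => lt_of_lt_of_le one_pos (le_max_right _ _), ?_, ?_, ?_⟩
    · intro e he
      have hpos := hr.pos hd2 he
      rcases le_total (r e) 1 with h | h
      · exact Or.inl (max_eq_right h)
      · right
        show max (r (e.2, e.1)) 1 = 1
        have : (e.2, e.1) = e.swap := rfl
        rw [this, hr.swap_eq_inv hd2 he]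
        exact max_eq_right (inv_le_one_of_one_le₀ h)
    · intro e he
      constructor
      · calc 1 / (d e : ℝ) ≤ 1 := by
              rw [div_le_one (dpos hd2 he)]; exact done' hd2 he
          _ ≤ max (r e) 1 := le_max_right _ _
      · exact max_le (hr.2.2.2.1 e he) (done' hd2 he)
    · intro v hvs hvt
      have h1 : ∏ e ∈ E.filter (fun e => e.1 = v), max (r e) 1
          = ∏ e ∈ E.filter (fun e => e.2 = v), max (r e.swap) 1 :=
        (prod_swap_filter hsymm (fun e => max (r e) 1) v).symm
      rw [h1]
      have h2 : ∏ e ∈ E.filter (fun e => e.2 = v), max (r e) 1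
          = (∏ e ∈ E.filter (fun e => e.2 = v), r e) *
            ∏ e ∈ E.filter (fun e => e.2 = v), max (r e.swap) 1 := by
        rw [← Finset.prod_mul_distrib]
        exact Finset.prod_congr rfl fun e he => key e (Finset.mem_filter.mp he).1
      rw [h2, hr.2.2.2.2 v hvs hvt, one_mul]
  · unfold flowValue rval
    have h1 : ∏ e ∈ E.filter (fun e => e.2 = s), max (r e) 1
        = ∏ e ∈ E.filter (fun e => e.1 = s), max (r e.swap) 1 :=
      (prod_swap_filter' hsymm (fun e => max (r e) 1) s).symm
    rw [h1]
    have h2 : ∏ e ∈ E.filter (fun e => e.1 = s), max (r e) 1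
        = (∏ e ∈ E.filter (fun e => e.1 = s), r e) *
          ∏ e ∈ E.filter (fun e => e.1 = s), max (r e.swap) 1 := by
      rw [← Finset.prod_mul_distrib]
      exact Finset.prod_congr rfl fun e he => key e (Finset.mem_filter.mp he).1
    rw [h2]
    have hpos : 0 < ∏ e ∈ E.filter (fun e => e.1 = s), max (r e.swap) 1 :=
      Finset.prod_pos fun e he => lt_of_lt_of_le one_pos (le_max_right _ _)
    rw [mul_div_assoc, div_self hpos.ne', mul_one]


/-- Augmenting along a residual path: given a duplicate-free residual chain from `v` to `t`,
we can scale the flow so that everything is conserved except a deficit factor `c` at `v`. -/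
lemma aug (hsymm : ∀ u v : V, (u, v) ∈ E → (v, u) ∈ E)
    (hdsymm : ∀ u v : V, d (u, v) = d (v, u)) (hd2 : ∀ e ∈ E, 2 ≤ d e)
    (hr : RF E d s t r) :
    ∀ (p : List V) (v : V),
      List.Chain (fun u w => (u, w) ∈ E ∧ r (u, w) < (d (u, w) : ℝ)) v p →
      (v :: p).Nodup → (v :: p).getLast (List.cons_ne_nil _ _) = t →
      ∃ c₀ : ℝ, 1 < c₀ ∧ ∀ c : ℝ, 1 ≤ c → c ≤ c₀ →
      ∃ r' : V × V → ℝ,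
        (∀ e, e ∉ E → r' e = 1) ∧
        (∀ e ∈ E, 1 / (d e : ℝ) ≤ r' e) ∧
        (∀ e ∈ E, r' e * r' e.swap = 1) ∧
        (∀ e ∈ E, r' e ≤ (d e : ℝ)) ∧
        (∀ w, w ≠ v → w ≠ t → ∏ e ∈ E.filter (fun e => e.2 = w), r' e
            = ∏ e ∈ E.filter (fun e => e.2 = w), r e) ∧
        (v ≠ t → ∏ e ∈ E.filter (fun e => e.2 = v), r' e
            = (∏ e ∈ E.filter (fun e => e.2 = v), r e) / c) ∧
        (∀ e ∈ E, (e.1 ∉ (v :: p) ∨ e.2 ∉ (v :: p)) → r' e = r e) := by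
  intro p
  induction p with
  | nil =>
    intro v hch hnd hlast
    have hv : v = t := by simpa using hlast
    exact ⟨2, one_lt_two, fun c hc1 hc2 => ⟨r, hr.1, hr.2.1, hr.2.2.1, hr.2.2.2.1,
      fun w _ _ => rfl, fun hvt => absurd hv hvt, fun e _ _ => rfl⟩⟩
  | cons w p' ih =>
    intro v hch hnd hlast
    obtain ⟨hres, hch'⟩ := List.chain_cons.mp hch
    obtain ⟨hvwE, hltd⟩ := hres
    have hnd' : (w :: p').Nodup := (List.nodup_cons.mp hnd).2
    have hvnotin : v ∉ w :: p' := (List.nodup_cons.mp hnd).1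
    have hlast' : (w :: p').getLast (List.cons_ne_nil _ _) = t := hlast
    obtain ⟨c₀', hc₀', H⟩ := ih w hch' hnd' hlast'
    have hrpos : 0 < r (v, w) := hr.pos hd2 hvwE
    have hhgt : 1 < (d (v, w) : ℝ) / r (v, w) := (one_lt_div hrpos).mpr hltd
    refine ⟨min c₀' ((d (v, w) : ℝ) / r (v, w)), lt_min hc₀' hhgt, ?_⟩
    intro c hc1 hc2
    obtain ⟨r'', h''off, h''low, h''rec, h''up, h''consA, h''consB, h''agree⟩ :=
      H c hc1 (le_trans hc2 (min_le_left _ _))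
    have hcpos : (0:ℝ) < c := lt_of_lt_of_le one_pos hc1
    have hvw : v ≠ w := fun h => hvnotin (h ▸ List.mem_cons_self)
    have hwvE : (w, v) ∈ E := hsymm v w hvwE
    have hwvpos : 0 < r (w, v) := hr.pos hd2 hwvE
    have hrec_vw : r (v, w) * r (w, v) = 1 := hr.2.2.1 (v, w) hvwE
    have hc2h : c ≤ (d (v, w) : ℝ) / r (v, w) := le_trans hc2 (min_le_right _ _)
    have hup_vw : r (v, w) * c ≤ (d (v, w) : ℝ) := by
      calc r (v, w) * c ≤ r (v, w) * ((d (v, w) : ℝ) / r (v, w)) :=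
            mul_le_mul_of_nonneg_left hc2h hrpos.le
        _ = (d (v, w) : ℝ) := by field_simp
    have hne : ((v, w) : V × V) ≠ (w, v) := fun h => hvw (congrArg Prod.fst h)
    have hne' : ((w, v) : V × V) ≠ (v, w) := hne.symm
    set r' : V × V → ℝ :=
      Function.update (Function.update r'' (v, w) (r (v, w) * c)) (w, v) (r (w, v) / c)
      with hr'def
    have hval_wv : r' (w, v) = r (w, v) / c := Function.update_self _ _ _
    have hval_vw : r' (v, w) = r (v, w) * c := by
      rw [hr'def, Function.update_of_ne hne, Function.update_self]
    have hval_other : ∀ e, e ≠ (v, w) → e ≠ (w, v) → r' e = r'' e := by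
      intro e he1 he2
      rw [hr'def, Function.update_of_ne he2, Function.update_of_ne he1]
    have h1 : r'' (v, w) = r (v, w) :=
      h''agree (v, w) hvwE (Or.inl hvnotin)
    have h2 : r'' (w, v) = r (w, v) :=
      h''agree (w, v) hwvE (Or.inr hvnotin)
    refine ⟨r', ?_, ?_, ?_, ?_, ?_, ?_, ?_⟩
    · -- off E
      intro e he
      have e1 : e ≠ (v, w) := fun h => he (h ▸ hvwE)
      have e2 : e ≠ (w, v) := fun h => he (h ▸ hwvE)
      rw [hval_other e e1 e2]
      exact h''off e he
    · -- lower bounds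
      intro e he
      by_cases e1 : e = (v, w)
      · subst e1
        rw [hval_vw]
        calc 1 / (d (v, w) : ℝ) ≤ r (v, w) := hr.2.1 _ hvwE
          _ ≤ r (v, w) * c := le_mul_of_one_le_right hrpos.le hc1
      · by_cases e2 : e = (w, v)
        · subst e2
          rw [hval_wv]
          have hkey : r (w, v) / c = (r (v, w) * c)⁻¹ := by
            field_simp
            linear_combination hrec_vw
          rw [hkey]
          have hd' : d (w, v) = d (v, w) := hdsymm w v
          rw [hd']
          rw [one_div]
          apply inv_anti₀
          · exact mul_pos hrpos hcpos
          · exact hup_vw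
        · rw [hval_other e e1 e2]
          exact h''low e he
    · -- reciprocal
      intro e he
      by_cases e1 : e = (v, w)
      · subst e1
        have : (Prod.swap (v, w) : V × V) = (w, v) := rfl
        rw [this, hval_vw, hval_wv]
        field_simp
        linear_combination hrec_vw
      · by_cases e2 : e = (w, v)
        · subst e2
          have : (Prod.swap (w, v) : V × V) = (v, w) := rfl
          rw [this, hval_vw, hval_wv]
          field_simp
          linear_combination hrec_vw
        · have s1 : e.swap ≠ (v, w) := by
            intro h
            apply e2
            have := congrArg Prod.swap h
            simpa [Prod.swap_swap] using this
          have s2 : e.swap ≠ (w, v) := by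
            intro h
            apply e1
            have := congrArg Prod.swap h
            simpa [Prod.swap_swap] using this
          rw [hval_other e e1 e2, hval_other e.swap s1 s2]
          exact h''rec e he
    · -- upper bounds
      intro e he
      by_cases e1 : e = (v, w)
      · subst e1; rw [hval_vw]; exact hup_vw
      · by_cases e2 : e = (w, v)
        · subst e2
          rw [hval_wv]
          calc r (w, v) / c ≤ r (w, v) := div_le_self hwvpos.le hc1
            _ ≤ (d (w, v) : ℝ) := hr.2.2.2.1 _ hwvE
        · rw [hval_other e e1 e2]
          exact h''up e he
    · -- conservation away from v and t
      intro x hxv hxt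
      by_cases hxw : x = w
      · have hwt : w ≠ t := by rw [← hxw]; exact hxt
        rw [hxw]
        have hwv_notA : ((w, v) : V × V) ∉ E.filter (fun e => e.2 = w) := by
          simp only [Finset.mem_filter]
          rintro ⟨-, h⟩
          exact hvw h
        have hvw_A : ((v, w) : V × V) ∈ E.filter (fun e => e.2 = w) :=
          Finset.mem_filter.mpr ⟨hvwE, rfl⟩
        rw [hr'def]
        rw [Finset.prod_update_of_notMem hwv_notA]
        rw [Finset.prod_update_of_mem hvw_A, ← Finset.erase_eq]
        have hsplit := Finset.mul_prod_erase (E.filter (fun e => e.2 = w)) r'' hvw_A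
        have hcons := h''consB hwt
        calc r (v, w) * c * ∏ e ∈ (E.filter (fun e => e.2 = w)).erase (v, w), r'' e
            = c * (r'' (v, w) * ∏ e ∈ (E.filter (fun e => e.2 = w)).erase (v, w), r'' e) := by
              rw [h1]; ring
          _ = c * ∏ e ∈ E.filter (fun e => e.2 = w), r'' e := by rw [hsplit]
          _ = c * ((∏ e ∈ E.filter (fun e => e.2 = w), r e) / c) := by rw [hcons]
          _ = ∏ e ∈ E.filter (fun e => e.2 = w), r e := by field_simp
      · have hk1 : ((w, v) : V × V) ∉ E.filter (fun e => e.2 = x) := by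
          simp only [Finset.mem_filter]
          rintro ⟨-, h⟩
          exact hxv h.symm
        have hk2 : ((v, w) : V × V) ∉ E.filter (fun e => e.2 = x) := by
          simp only [Finset.mem_filter]
          rintro ⟨-, h⟩
          exact hxw h.symm
        rw [hr'def, Finset.prod_update_of_notMem hk1, Finset.prod_update_of_notMem hk2]
        exact h''consA x hxw hxt
    · -- deficit at v
      intro hvt
      have hwv_A : ((w, v) : V × V) ∈ E.filter (fun e => e.2 = v) :=
        Finset.mem_filter.mpr ⟨hwvE, rfl⟩
      have hvw_notA : ((v, w) : V × V) ∉ (E.filter (fun e => e.2 = v)).erase (w, v) := by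
        simp only [Finset.mem_erase, Finset.mem_filter]
        rintro ⟨-, -, h⟩
        exact hvw h.symm
      rw [hr'def, Finset.prod_update_of_mem hwv_A, ← Finset.erase_eq]
      rw [Finset.prod_update_of_notMem hvw_notA]
      have hagree_er : ∏ e ∈ (E.filter (fun e => e.2 = v)).erase (w, v), r'' e
          = ∏ e ∈ (E.filter (fun e => e.2 = v)).erase (w, v), r e := by
        refine Finset.prod_congr rfl fun e he => ?_
        have he' := Finset.mem_filter.mp (Finset.mem_of_mem_erase he)
        refine h''agree e he'.1 (Or.inr ?_)
        rw [he'.2]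
        exact hvnotin
      rw [hagree_er]
      have hsplit := Finset.mul_prod_erase (E.filter (fun e => e.2 = v)) r hwv_A
      rw [← hsplit]
      field_simp
    · -- agreement off the path
      intro e he hnot
      have e1 : e ≠ (v, w) := by
        rintro rfl
        rcases hnot with h | h
        · exact h (List.mem_cons_self)
        · exact h (List.mem_cons_of_mem _ (List.mem_cons_self))
      have e2 : e ≠ (w, v) := by
        rintro rfl
        rcases hnot with h | h
        · exact h (List.mem_cons_of_mem _ (List.mem_cons_self))
        · exact h (List.mem_cons_self)
      rw [hval_other e e1 e2]
      refine h''agree e he ?_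
      rcases hnot with h | h
      · exact Or.inl fun hm => h (List.mem_cons_of_mem _ hm)
      · exact Or.inr fun hm => h (List.mem_cons_of_mem _ hm)

lemma exists_max_RF (hd2 : ∀ e ∈ E, 2 ≤ d e) :
    ∃ r : V × V → ℝ, RF E d s t r ∧ ∀ r', RF E d s t r' → rval E s r' ≤ rval E s r := by
  classical
  set K : Set ((V × V) → ℝ) := {r | RF E d s t r} with hK
  have hKne : K.Nonempty := by
    refine ⟨fun _ => 1, fun e _ => rfl, fun e he => ?_, fun e he => one_mul 1, fun e he => done' hd2 he,
      fun v _ _ => Finset.prod_const_one⟩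
    rw [div_le_one (dpos hd2 he)]
    exact done' hd2 he
  have hclosed : IsClosed K := by
    have h1 : IsClosed {r : (V × V) → ℝ | ∀ e, e ∉ E → r e = 1} := by
      have : {r : (V × V) → ℝ | ∀ e, e ∉ E → r e = 1}
          = ⋂ (e) (_ : e ∉ E), {r : (V × V) → ℝ | r e = 1} := by ext; simp
      rw [this]
      exact isClosed_iInter fun e => isClosed_iInter fun _ =>
        isClosed_eq (continuous_apply e) continuous_const
    have h2 : IsClosed {r : (V × V) → ℝ | ∀ e ∈ E, 1 / (d e : ℝ) ≤ r e} := by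
      have : {r : (V × V) → ℝ | ∀ e ∈ E, 1 / (d e : ℝ) ≤ r e}
          = ⋂ (e) (_ : e ∈ E), {r : (V × V) → ℝ | 1 / (d e : ℝ) ≤ r e} := by ext; simp
      rw [this]
      exact isClosed_iInter fun e => isClosed_iInter fun _ =>
        isClosed_le continuous_const (continuous_apply e)
    have h3 : IsClosed {r : (V × V) → ℝ | ∀ e ∈ E, r e * r e.swap = 1} := by
      have : {r : (V × V) → ℝ | ∀ e ∈ E, r e * r e.swap = 1}
          = ⋂ (e) (_ : e ∈ E), {r : (V × V) → ℝ | r e * r e.swap = 1} := by ext; simp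
      rw [this]
      exact isClosed_iInter fun e => isClosed_iInter fun _ =>
        isClosed_eq (Continuous.mul (continuous_apply e) (continuous_apply e.swap))
          continuous_const
    have h4 : IsClosed {r : (V × V) → ℝ | ∀ e ∈ E, r e ≤ (d e : ℝ)} := by
      have : {r : (V × V) → ℝ | ∀ e ∈ E, r e ≤ (d e : ℝ)}
          = ⋂ (e) (_ : e ∈ E), {r : (V × V) → ℝ | r e ≤ (d e : ℝ)} := by ext; simp
      rw [this]
      exact isClosed_iInter fun e => isClosed_iInter fun _ =>
        isClosed_le (continuous_apply e) continuous_const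
    have h5 : IsClosed {r : (V × V) → ℝ |
        ∀ v : V, v ≠ s → v ≠ t → ∏ e ∈ E.filter (fun e => e.2 = v), r e = 1} := by
      have : {r : (V × V) → ℝ |
          ∀ v : V, v ≠ s → v ≠ t → ∏ e ∈ E.filter (fun e => e.2 = v), r e = 1}
          = ⋂ (v) (_ : v ≠ s) (_ : v ≠ t),
            {r : (V × V) → ℝ | ∏ e ∈ E.filter (fun e => e.2 = v), r e = 1} := by ext; simp
      rw [this]
      refine isClosed_iInter fun v => isClosed_iInter fun _ => isClosed_iInter fun _ =>
        isClosed_eq ?_ continuous_const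
      exact continuous_finset_prod _ fun e _ => continuous_apply e
    have hKeq : K = {r : (V × V) → ℝ | ∀ e, e ∉ E → r e = 1}
        ∩ ({r | ∀ e ∈ E, 1 / (d e : ℝ) ≤ r e}
        ∩ ({r | ∀ e ∈ E, r e * r e.swap = 1}
        ∩ ({r | ∀ e ∈ E, r e ≤ (d e : ℝ)}
        ∩ {r | ∀ v : V, v ≠ s → v ≠ t → ∏ e ∈ E.filter (fun e => e.2 = v), r e = 1}))) := by
      ext r; exact Iff.rfl
    rw [hKeq]
    exact h1.inter (h2.inter (h3.inter (h4.inter h5)))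
  set C : (V × V) → Set ℝ := fun e => if e ∈ E then Set.Icc (1 / (d e : ℝ)) ((d e : ℝ)) else {1}
    with hC
  have hCcomp : ∀ e, IsCompact (C e) := by
    intro e
    by_cases he : e ∈ E
    · simp only [hC, if_pos he]; exact isCompact_Icc
    · simp only [hC, if_neg he]; exact isCompact_singleton
  have hsub : K ⊆ Set.pi Set.univ C := by
    intro r hr
    rw [Set.mem_univ_pi]
    intro e
    by_cases he : e ∈ E
    · simp only [hC, if_pos he]
      exact Set.mem_Icc.mpr ⟨hr.2.1 e he, hr.2.2.2.1 e he⟩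
    · simp only [hC, if_neg he]
      exact hr.1 e he
  have hKcomp : IsCompact K :=
    IsCompact.of_isClosed_subset (isCompact_univ_pi hCcomp) hclosed hsub
  have hcont : Continuous (rval E s) :=
    continuous_finset_prod _ fun e _ => continuous_apply e
  obtain ⟨r, hrK, hmax⟩ := hKcomp.exists_isMaxOn hKne hcont.continuousOn
  exact ⟨r, hrK, fun r' hr' => hmax hr'⟩


/-- Extract a duplicate-free chain from a `ReflTransGen` witness. -/
lemma nodup_chain_aux {α : Type*} (rel : α → α → Prop) (b : α) :
    ∀ (n : ℕ) (l : List α) (a : α), List.Chain rel a l →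
      (a :: l).getLast (List.cons_ne_nil _ _) = b → l.length ≤ n →
    ∃ l' : List α, List.Chain rel a l' ∧ (a :: l').Nodup ∧
      (a :: l').getLast (List.cons_ne_nil _ _) = b ∧ l'.length ≤ l.length := by
  intro n
  induction n with
  | zero =>
    intro l a hc hlast hlen
    have hl : l = [] := List.length_eq_zero_iff.mp (Nat.le_zero.mp hlen)
    subst hl
    exact ⟨[], List.Chain.nil, by simp, hlast, le_refl _⟩
  | succ n ih =>
    intro l a hc hlast hlen
    by_cases ha : a ∈ l
    · obtain ⟨l₁, l₂, rfl⟩ := List.append_of_mem ha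
      have hc2 : List.Chain rel a l₂ := (List.isChain_cons_split.mp hc).2
      have hlast2 : (a :: l₂).getLast (List.cons_ne_nil _ _) = b := by
        have h := List.getLast_append_of_ne_nil (l := a :: l₁) (List.append_ne_nil_of_right_ne_nil _ (List.cons_ne_nil a l₂)) (List.cons_ne_nil a l₂)
        rw [← hlast]
        exact h.symm
      have hlen2 : l₂.length ≤ n := by
        simp only [List.length_append, List.length_cons] at hlen
        omega
      obtain ⟨l', h1, h2, h3, h4⟩ := ih l₂ a hc2 hlast2 hlen2
      refine ⟨l', h1, h2, h3, ?_⟩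
      simp only [List.length_append, List.length_cons]
      omega
    · cases l with
      | nil => exact ⟨[], hc, by simp, hlast, by simp⟩
      | cons c l' =>
        have hrel : rel a c := (List.chain_cons.mp hc).1
        have hc' : List.Chain rel c l' := (List.chain_cons.mp hc).2
        have hlast' : (c :: l').getLast (List.cons_ne_nil _ _) = b := hlast
        have hlen' : l'.length ≤ n := by
          simp only [List.length_cons] at hlen; omega
        obtain ⟨l'', h1, h2, h3, h4⟩ := ih l' c hc' hlast' hlen'
        by_cases hac : a ∈ c :: l''
        · have hcfull : List.Chain rel a (c :: l'') := List.chain_cons.mpr ⟨hrel, h1⟩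
          obtain ⟨l₁, l₂, heq⟩ := List.append_of_mem hac
          have hc2 : List.Chain rel a l₂ := (List.isChain_cons_split.mp (heq ▸ hcfull)).2
          have hlast2 : (a :: l₂).getLast (List.cons_ne_nil _ _) = b := by
            have hgl : (a :: (c :: l'')).getLast (List.cons_ne_nil _ _) = b := h3
            rw [heq] at hgl
            have h := List.getLast_append_of_ne_nil (l := a :: l₁) (List.append_ne_nil_of_right_ne_nil _ (List.cons_ne_nil a l₂)) (List.cons_ne_nil a l₂)
            rw [← hgl]
            exact h.symm
          have hlenl₂ : l₂.length ≤ l''.length := by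
            have : (c :: l'').length = l₁.length + 1 + l₂.length := by
              rw [heq]; simp [List.length_append]; omega
            simp only [List.length_cons] at this
            omega
          obtain ⟨l₃, g1, g2, g3, g4⟩ := ih l₂ a hc2 hlast2 (le_trans hlenl₂ (le_trans h4 hlen'))
          refine ⟨l₃, g1, g2, g3, ?_⟩
          simp only [List.length_cons]
          omega
        · refine ⟨c :: l'', List.chain_cons.mpr ⟨hrel, h1⟩, ?_, h3, ?_⟩
          · exact List.nodup_cons.mpr ⟨hac, h2⟩
          · simp only [List.length_cons]; omega

lemma exists_nodup_chain {α : Type*} {rel : α → α → Prop} {a b : α}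
    (h : Relation.ReflTransGen rel a b) :
    ∃ l : List α, List.Chain rel a l ∧ (a :: l).Nodup ∧
      (a :: l).getLast (List.cons_ne_nil _ _) = b := by
  obtain ⟨l, hc, hlast⟩ := List.exists_isChain_cons_of_relationReflTransGen h
  obtain ⟨l', h1, h2, h3, _⟩ := nodup_chain_aux rel b l.length l a hc hlast le_rfl
  exact ⟨l', h1, h2, h3⟩


end Basic
end QAux



/-- The maximum flow over ℝ of a quantum tensor network equals the
quantum min-cut: every real multiplicative flow has value at most `QMC`, and there is
a real multiplicative flow achieving value exactly `QMC`. -/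
theorem QMF_real_eq_QMC {V : Type*} [DecidableEq V]
    (E : Finset (V × V)) (hsymm : ∀ u v : V, (u, v) ∈ E → (v, u) ∈ E)
    (d : V × V → ℕ) (hdsymm : ∀ u v : V, d (u, v) = d (v, u))
    (hd2 : ∀ e ∈ E, 2 ≤ d e)
    (s t : V) (hst : s ≠ t) :
    (∀ f : V × V → ℝ, IsRealQFlow E d s t f → flowValue E s f ≤ (QMC E d s t : ℝ)) ∧
    (∃ f : V × V → ℝ, IsRealQFlow E d s t f ∧ flowValue E s f = (QMC E d s t : ℝ)) := by
  classical
  constructor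
  · intro f hf
    obtain ⟨hrf, hval⟩ := QAux.RF_of_flow hsymm hdsymm hd2 hf
    rw [← hval]
    exact QAux.RF.le_QMC hrf hsymm hd2 hst
  · obtain ⟨r, hrK, hmax⟩ := QAux.exists_max_RF (E := E) (d := d) (s := s) (t := t) hd2
    set res : V → V → Prop := fun u w => (u, w) ∈ E ∧ r (u, w) < (d (u, w) : ℝ) with hresdef
    by_cases hreach : Relation.ReflTransGen res s t
    · exfalso
      obtain ⟨l, hch, hnd, hlast⟩ := QAux.exists_nodup_chain hreach
      obtain ⟨c₀, hc₀, H⟩ := QAux.aug hsymm hdsymm hd2 hrK l s hch hnd hlast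
      obtain ⟨r', off, low, rec, up, consA, consB, agree⟩ := H c₀ hc₀.le le_rfl
      have hr' : QAux.RF E d s t r' :=
        ⟨off, low, rec, up, fun w hws hwt => by
          rw [consA w hws hwt]; exact hrK.2.2.2.2 w hws hwt⟩
      have h1 : QAux.rval E s r' = (∏ e ∈ E.filter (fun e => e.2 = s), r' e)⁻¹ := by
        unfold QAux.rval
        exact hr'.out_eq_inv_in hsymm hd2 s
      have h2 : QAux.rval E s r = (∏ e ∈ E.filter (fun e => e.2 = s), r e)⁻¹ := by
        unfold QAux.rval
        exact hrK.out_eq_inv_in hsymm hd2 s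
      have h3 : ∏ e ∈ E.filter (fun e => e.2 = s), r' e
          = (∏ e ∈ E.filter (fun e => e.2 = s), r e) / c₀ := consB hst
      have hpos : 0 < ∏ e ∈ E.filter (fun e => e.2 = s), r e :=
        Finset.prod_pos fun e he => hrK.pos hd2 (Finset.mem_filter.mp he).1
      have hc₀pos : (0:ℝ) < c₀ := lt_trans one_pos hc₀
      have hval' : QAux.rval E s r' = c₀ * QAux.rval E s r := by
        rw [h1, h3, h2]
        field_simp
      have hle := hmax r' hr'
      have hrvpos : 0 < QAux.rval E s r := by
        rw [h2]; positivity
      nlinarith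
    · set S : Finset V := insert s ((E.image Prod.fst).filter
          (fun v => Relation.ReflTransGen res s v)) with hS
      have hsS : s ∈ S := Finset.mem_insert_self _ _
      have htS : t ∉ S := by
        intro ht
        rcases Finset.mem_insert.mp ht with h | h
        · exact hst h.symm
        · exact hreach (Finset.mem_filter.mp h).2
      have hreachS : ∀ v ∈ S, Relation.ReflTransGen res s v := by
        intro v hv
        rcases Finset.mem_insert.mp hv with h | h
        · exact h ▸ Relation.ReflTransGen.refl
        · exact (Finset.mem_filter.mp h).2
      have hsat : ∀ e ∈ E.filter (fun e => e.1 ∈ S ∧ e.2 ∉ S), r e = (d e : ℝ) := by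
        intro e he
        obtain ⟨heE, h1S, h2S⟩ : e ∈ E ∧ e.1 ∈ S ∧ e.2 ∉ S := by
          simpa [Finset.mem_filter, and_assoc] using he
        refine le_antisymm (hrK.2.2.2.1 e heE) (not_lt.mp fun hlt => ?_)
        have hres : res e.1 e.2 := ⟨by simpa using heE, by simpa using hlt⟩
        have hre2 : Relation.ReflTransGen res s e.2 := (hreachS e.1 h1S).tail hres
        apply h2S
        refine Finset.mem_insert.mpr (Or.inr (Finset.mem_filter.mpr ⟨?_, hre2⟩))
        exact Finset.mem_image.mpr ⟨e.swap, QAux.swap_mem hsymm heE, rfl⟩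
      have hcut : QAux.rval E s r
          = ((∏ e ∈ E.filter (fun e => e.1 ∈ S ∧ e.2 ∉ S), d e : ℕ) : ℝ) := by
        rw [hrK.cut_identity hsymm hd2 S hsS htS, Finset.prod_congr rfl hsat]
        push_cast
        rfl
      have hQle : QMC E d s t ≤ ∏ e ∈ E.filter (fun e => e.1 ∈ S ∧ e.2 ∉ S), d e :=
        Nat.sInf_le ⟨S, hsS, htS, rfl⟩
      obtain ⟨hflow, hfval⟩ := QAux.flow_of_RF hsymm hd2 hrK
      refine ⟨_, hflow, ?_⟩
      rw [hfval]
      have hle1 : QAux.rval E s r ≤ (QMC E d s t : ℝ) := hrK.le_QMC hsymm hd2 hst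
      have hle2 : (QMC E d s t : ℝ) ≤ QAux.rval E s r := by
        rw [hcut]; exact_mod_cast hQle
      linarith
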